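/- Let p ≥ 0 be an integer, let P : ℝ → ℝ be a polynomial of degree at most p, let λ_s < λ_t be reals with h := λ_t − λ_s, and let α_t, σ_t > 0 satisfy σ_t = α_t e^{−λ_t}. Then α_t · ∫_{λ_s}^{λ_t} e^{−λ} P(λ) dλ = σ_t · Σ_{k=0}^{p} P^{(k)}(λ_s) · (e^h − Σ_{j=0}^{k} h^j/j!). That is, for a polynomial integrand the exponentially weighted integral equals its (exactly truncating) Taylor expansion in the unified framework, so the DEIS update with Lagrange interpolation in the log-SNR domain coincides with the Taylor-expansion update. -/

import Mathlib

lemma integral_exp_neg_mul_pow (ls lt : ℝ) (k : ℕ) :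
    (∫ l in ls..lt, Real.exp (-l) * (l - ls) ^ k) =
      (k.factorial : ℝ) * Real.exp (-lt) *
        (Real.exp (lt - ls) - ∑ j ∈ Finset.range (k + 1), (lt - ls) ^ j / (j.factorial : ℝ)) := by
  set g : ℝ → ℝ := fun l => ∑ j ∈ Finset.range (k + 1),
      ((k.factorial : ℝ) / (j.factorial : ℝ)) * (l - ls) ^ j with hg
  have hgd : ∀ l : ℝ, HasDerivAt g (g l - (l - ls) ^ k) l := by
    intro l
    have h1 : HasDerivAt g (∑ j ∈ Finset.range (k + 1),
        ((k.factorial : ℝ) / (j.factorial : ℝ)) * ((j : ℝ) * (l - ls) ^ (j - 1))) l := by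
      apply HasDerivAt.fun_sum
      intro j hj
      simpa using (((hasDerivAt_id l).sub_const ls).pow j).const_mul
        ((k.factorial : ℝ) / (j.factorial : ℝ))
    convert h1 using 1
    rw [Finset.sum_range_succ'
      (fun j => ((k.factorial : ℝ) / (j.factorial : ℝ)) * ((j : ℝ) * (l - ls) ^ (j - 1)))]
    simp only [Nat.cast_zero, zero_mul, mul_zero, add_zero, Nat.add_sub_cancel]
    rw [hg]
    simp only
    rw [Finset.sum_range_succ, div_self (by positivity : (k.factorial : ℝ) ≠ 0), one_mul,
      add_sub_cancel_right]
    refine Finset.sum_congr rfl fun j _ => ?_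
    have : ((j + 1).factorial : ℝ) = (j + 1) * (j.factorial : ℝ) := by
      push_cast [Nat.factorial_succ]; ring
    field_simp [this]
    rw [this]; push_cast; ring
  have hF : ∀ l : ℝ, HasDerivAt (fun l => -Real.exp (-l) * g l)
      (Real.exp (-l) * (l - ls) ^ k) l := by
    intro l
    have he : HasDerivAt (fun l : ℝ => -Real.exp (-l)) (Real.exp (-l)) l := by
      have := ((hasDerivAt_id l).neg.exp).neg
      simpa [Pi.neg_def] using this
    have := he.fun_mul (hgd l)
    refine this.congr_deriv ?_
    ring
  rw [intervalIntegral.integral_eq_sub_of_hasDerivAt (fun l _ => hF l)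
    (by apply Continuous.intervalIntegrable; continuity)]
  have hgls : g ls = (k.factorial : ℝ) := by
    rw [hg]
    simp only [sub_self]
    rw [Finset.sum_eq_single 0]
    · simp
    · intro j _ hj; simp [zero_pow hj]
    · simp
  have hglt : g lt = (k.factorial : ℝ) * ∑ j ∈ Finset.range (k + 1),
      (lt - ls) ^ j / (j.factorial : ℝ) := by
    rw [hg, Finset.mul_sum]
    refine Finset.sum_congr rfl fun j _ => ?_
    ring
  rw [hgls, hglt]
  have : Real.exp (-ls) = Real.exp (-lt) * Real.exp (lt - ls) := by
    rw [← Real.exp_add]; ring_nf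
  rw [this]
  ring

/-- For a polynomial integrand the exponentially weighted integral equals its
exactly truncating Taylor expansion: DEIS with Lagrange interpolation in the
log-SNR domain coincides with the Taylor-expansion update. -/
theorem stmt_16 (p : ℕ) (P : Polynomial ℝ) (hdeg : P.natDegree ≤ p)
    (ls lt : ℝ) (hord : ls < lt) (h : ℝ) (hh : h = lt - ls)
    (αt σt : ℝ) (hαt : 0 < αt) (hσt : 0 < σt)
    (hrel : σt = αt * Real.exp (-lt)) :
    (αt * ∫ l in ls..lt, Real.exp (-l) * P.eval l) =
      σt * ∑ k ∈ Finset.range (p + 1),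
        ((fun Q => Polynomial.derivative Q)^[k] P).eval ls *
          (Real.exp h - ∑ j ∈ Finset.range (k + 1), h ^ j / (j.factorial : ℝ)) := by
  have hev : ∀ l : ℝ, P.eval l = ∑ k ∈ Finset.range (p + 1),
      (Polynomial.taylor ls P).coeff k * (l - ls) ^ k := by
    intro l
    have hd : (Polynomial.taylor ls P).natDegree < p + 1 := by
      rw [Polynomial.natDegree_taylor]; omega
    have := Polynomial.eval_eq_sum_range' hd (l - ls)
    rw [Polynomial.taylor_eval_sub] at this
    exact this
  have hswap : (∫ l in ls..lt, Real.exp (-l) * P.eval l) =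
      ∑ k ∈ Finset.range (p + 1), (Polynomial.taylor ls P).coeff k *
        ∫ l in ls..lt, Real.exp (-l) * (l - ls) ^ k := by
    have : (∫ l in ls..lt, Real.exp (-l) * P.eval l) =
        ∫ l in ls..lt, ∑ k ∈ Finset.range (p + 1),
          (Polynomial.taylor ls P).coeff k * (Real.exp (-l) * (l - ls) ^ k) := by
      congr 1; ext l; rw [hev l, Finset.mul_sum]
      exact Finset.sum_congr rfl fun k _ => by ring
    rw [this, intervalIntegral.integral_finset_sum]
    · refine Finset.sum_congr rfl fun k _ => ?_
      rw [intervalIntegral.integral_const_mul]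
    · intro k _
      apply Continuous.intervalIntegrable; continuity
  have hder : ∀ k : ℕ, ((fun Q => Polynomial.derivative Q)^[k] P).eval ls =
      (k.factorial : ℝ) * (Polynomial.taylor ls P).coeff k := by
    intro k
    rw [Polynomial.taylor_coeff]
    have := congrFun (Polynomial.factorial_smul_hasseDeriv (R := ℝ) k) P
    simp only [LinearMap.smul_apply] at this
    rw [← this]
    simp [mul_comm]
  rw [hswap, Finset.mul_sum, Finset.mul_sum]
  refine Finset.sum_congr rfl fun k _ => ?_
  rw [integral_exp_neg_mul_pow, hder, hrel, hh]
  ring
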